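/- For each dimension l = 1,…,d let μ_l be a measure on ℝ with all polynomial moments finite, and let (Q^{(l)}_m)_{m≥1} be quadrature rules such that Q^{(l)}_m is exact of degree a_l(m) for μ_l, where each a_l : {1,2,…} → ℕ is nondecreasing. Let K ⊆ {1,2,…}^d be a finite admissible multi-index set and let A := Σ_{k∈K} Δ^{(1)}_{k_1} ⊗ ⋯ ⊗ Δ^{(d)}_{k_d} be the corresponding Smolyak quadrature. Then for every multi-index α ∈ ℕ^d for which there exists k ∈ K with α_l ≤ a_l(k_l) for all l, the Smolyak quadrature integrates the monomial exactly: A(x ↦ Π_l x_l^{α_l}) = ∫ Π_l x_l^{α_l} d(μ_1 ⊗ ⋯ ⊗ μ_d). -/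

import Mathlib

open MeasureTheory

/-- The tensor quadrature `Q_k = Q^{(1)}_{k 1} ⊗ ⋯ ⊗ Q^{(d)}_{k d}` acting on a function
`f : ℝ^d → ℝ` by summing over the product node grid with product weights.  `N l m` is
the number of points of the level-`m` rule in dimension `l`, with nodes `x l m` and
weights `w l m`; the level-`0` rule `Q^{(l)}_0 := 0` is encoded by `N l 0 = 0`, which
makes any tensor rule with a zero level the zero functional. -/
noncomputable def tensorQuad {d : ℕ} (N : Fin d → ℕ → ℕ)
    (x w : ∀ (l : Fin d) (m : ℕ), Fin (N l m) → ℝ)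
    (k : Fin d → ℕ) (f : (Fin d → ℝ) → ℝ) : ℝ :=
  ∑ i : ∀ l, Fin (N l (k l)),
    (∏ l, w l (k l) (i l)) * f (fun l => x l (k l) (i l))

/-- The Smolyak quadrature `A = ∑_{k ∈ K} Δ_{k 1} ⊗ ⋯ ⊗ Δ_{k d}`, where
`Δ^{(l)}_m = Q^{(l)}_m − Q^{(l)}_{m−1}`: the tensor product of the differences is
expanded multilinearly, `Δ_{k 1} ⊗ ⋯ ⊗ Δ_{k d} = ∑_{S ⊆ {1,…,d}} (−1)^{|S|} Q_{k − 1_S}`. -/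
noncomputable def smolyakQuad {d : ℕ} (N : Fin d → ℕ → ℕ)
    (x w : ∀ (l : Fin d) (m : ℕ), Fin (N l m) → ℝ)
    (K : Finset (Fin d → ℕ)) (f : (Fin d → ℝ) → ℝ) : ℝ :=
  ∑ k ∈ K, ∑ S ∈ (Finset.univ : Finset (Fin d)).powerset,
    (-1 : ℝ) ^ S.card * tensorQuad N x w (fun l => k l - if l ∈ S then 1 else 0) f

/-- Tensor quadrature applied to a product function factors as a product of 1-d sums. -/
lemma tensorQuad_prod {d : ℕ} (N : Fin d → ℕ → ℕ)
    (x w : ∀ (l : Fin d) (m : ℕ), Fin (N l m) → ℝ)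
    (k : Fin d → ℕ) (g : Fin d → ℝ → ℝ) :
    tensorQuad N x w k (fun y => ∏ l, g l (y l))
      = ∏ l, ∑ i, w l (k l) i * g l (x l (k l) i) := by
  rw [tensorQuad]
  rw [show (∏ l, ∑ i, w l (k l) i * g l (x l (k l) i))
      = ∑ p ∈ Fintype.piFinset (fun l => (Finset.univ : Finset (Fin (N l (k l))))),
          ∏ l, w l (k l) (p l) * g l (x l (k l) (p l)) from
    Finset.prod_univ_sum _ _]
  rw [Fintype.piFinset_univ]
  exact Finset.sum_congr rfl fun p _ => (Finset.prod_mul_distrib).symm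

/-- Downward closure of an admissible set. -/
lemma admissible_downward {d : ℕ} (K : Finset (Fin d → ℕ))
    (hadm : ∀ k ∈ K, ∀ i, 2 ≤ k i → Function.update k i (k i - 1) ∈ K) :
    ∀ n (j : Fin d → ℕ), (∑ l, j l) = n → j ∈ K →
      ∀ k : Fin d → ℕ, (∀ l, 1 ≤ k l) → (∀ l, k l ≤ j l) → k ∈ K := by
  intro n
  induction n using Nat.strong_induction_on with
  | _ n ih =>
    intro j hjn hjK k hk1 hkj
    by_cases h : ∀ l, j l ≤ k l
    · have : k = j := funext fun l => le_antisymm (hkj l) (h l)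
      rwa [this]
    · push_neg at h
      obtain ⟨l, hl⟩ := h
      have h2 : 2 ≤ j l := by have := hk1 l; omega
      have hj' : Function.update j l (j l - 1) ∈ K := hadm j hjK l h2
      set j' := Function.update j l (j l - 1) with hj'def
      have hsum : (∑ m, j' m) < n := by
        rw [← hjn]
        apply Finset.sum_lt_sum
        · intro m _
          by_cases hm : m = l
          · subst hm; simp only [j', Function.update_self]; omega
          · simp only [j', Function.update_of_ne hm]; exact le_rfl
        · exact ⟨l, Finset.mem_univ l, by simp only [j', Function.update_self]; omega⟩
      exact ih _ hsum j' rfl hj' k hk1 (fun m => by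
        by_cases hm : m = l
        · subst hm; simp only [j', Function.update_self]; omega
        · simp only [j', Function.update_of_ne hm]; exact hkj m)

/-- (Exactness of Smolyak quadrature, Corollary 3.2 of the paper.)
For each dimension `l` let `μ l` be a measure on `ℝ` with all polynomial moments finite
and `Q^{(l)}_m` quadrature rules exact of degree `a l m` for `μ l`, with `a l`
nondecreasing (on levels `≥ 1`).  Let `K ⊆ {1,2,…}^d` be a finite admissible multi-index
set and `A` the corresponding Smolyak quadrature.  Then for every multi-index `α` such
that some `k ∈ K` satisfies `α l ≤ a l (k l)` for all `l`, the Smolyak quadrature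
integrates the monomial `x ↦ ∏ l, (x l)^(α l)` exactly against the product measure. -/
theorem smolyak_quadrature_exactness (d : ℕ)
    (μ : Fin d → Measure ℝ) [∀ l, SigmaFinite (μ l)]
    (hmom : ∀ l (m : ℕ), Integrable (fun t => t ^ m) (μ l))
    (N : Fin d → ℕ → ℕ) (hN0 : ∀ l, N l 0 = 0)
    (x w : ∀ (l : Fin d) (m : ℕ), Fin (N l m) → ℝ)
    (a : Fin d → ℕ → ℕ)
    (hmono : ∀ l, ∀ m m' : ℕ, 1 ≤ m → m ≤ m' → a l m ≤ a l m')
    (hexact : ∀ (l : Fin d) (m : ℕ), 1 ≤ m → ∀ p : Polynomial ℝ,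
      p.natDegree ≤ a l m →
      ∑ i, w l m i * p.eval (x l m i) = ∫ t, p.eval t ∂(μ l))
    (K : Finset (Fin d → ℕ))
    (hpos : ∀ k ∈ K, ∀ i, 1 ≤ k i)
    (hadm : ∀ k ∈ K, ∀ i, 2 ≤ k i → Function.update k i (k i - 1) ∈ K)
    (α : Fin d → ℕ) (hα : ∃ k ∈ K, ∀ l, α l ≤ a l (k l)) :
    smolyakQuad N x w K (fun y => ∏ l, y l ^ α l)
      = ∫ y, ∏ l, y l ^ α l ∂(Measure.pi μ) := by
  classical
  obtain ⟨k₀, hk₀K, hk₀⟩ := hα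
  set q : Fin d → ℕ → ℝ := fun l m => ∑ i, w l m i * (x l m i) ^ α l with hq
  set I : Fin d → ℝ := fun l => ∫ t, t ^ α l ∂(μ l) with hI
  have hq0 : ∀ l, q l 0 = 0 := by
    intro l
    have : IsEmpty (Fin (N l 0)) := by rw [hN0 l]; infer_instance
    simp [hq]
  have hqI : ∀ l m, 1 ≤ m → α l ≤ a l m → q l m = I l := by
    intro l m hm ham
    have := hexact l m hm (Polynomial.X ^ α l) (by simpa using ham)
    simpa [hq, hI] using this
  have hqI' : ∀ l m, k₀ l ≤ m → q l m = I l := fun l m hm =>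
    hqI l m (le_trans (hpos k₀ hk₀K l) hm)
      (le_trans (hk₀ l) (hmono l (k₀ l) m (hpos k₀ hk₀K l) hm))
  have htens : ∀ k : Fin d → ℕ,
      tensorQuad N x w k (fun y => ∏ l, y l ^ α l) = ∏ l, q l (k l) :=
    fun k => tensorQuad_prod N x w k (fun l t => t ^ α l)
  -- expand the product of differences
  have hdiff : ∀ k : Fin d → ℕ,
      (∑ S ∈ (Finset.univ : Finset (Fin d)).powerset,
        (-1 : ℝ) ^ S.card * ∏ l, q l (k l - if l ∈ S then 1 else 0))
      = ∏ l, (q l (k l) - q l (k l - 1)) := by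
    intro k
    have hPA := Finset.prod_add (fun l => -q l (k l - 1)) (fun l => q l (k l))
      (Finset.univ : Finset (Fin d))
    have heq : ∏ l, (q l (k l) - q l (k l - 1))
        = ∏ l, ((-q l (k l - 1)) + q l (k l)) := by
      apply Finset.prod_congr rfl; intro l _; ring
    rw [heq, hPA]
    apply Finset.sum_congr rfl
    intro S _
    have h1 : (∏ l ∈ S, -q l (k l - 1))
        = (-1 : ℝ) ^ S.card * ∏ l ∈ S, q l (k l - 1) := by
      rw [← Finset.prod_const, ← Finset.prod_mul_distrib]
      apply Finset.prod_congr rfl; intro l _; ring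
    have h2 : (∏ l, q l (k l - if l ∈ S then 1 else 0))
        = (∏ l ∈ S, q l (k l - 1)) * ∏ l ∈ Finset.univ \ S, q l (k l) := by
      rw [← Finset.prod_filter_mul_prod_filter_not Finset.univ (· ∈ S)]
      congr 1
      · rw [Finset.filter_univ_mem]
        apply Finset.prod_congr rfl; intro l hl; simp [hl]
      · have h3 : Finset.univ.filter (fun l => ¬ l ∈ S) = Finset.univ \ S := by
          ext m; simp
        rw [h3]
        apply Finset.prod_congr rfl; intro l hl
        rw [Finset.mem_sdiff] at hl
        simp [hl.2]
    rw [h1, h2]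
    ring
  -- Smolyak sum as a sum of difference products
  have hstep : smolyakQuad N x w K (fun y => ∏ l, y l ^ α l)
      = ∑ k ∈ K, ∏ l, (q l (k l) - q l (k l - 1)) := by
    rw [smolyakQuad]
    refine Finset.sum_congr rfl fun k hk => ?_
    rw [← hdiff k]
    exact Finset.sum_congr rfl fun S _ => by rw [htens]
  -- the box below k₀
  set B : Finset (Fin d → ℕ) := Fintype.piFinset (fun l => Finset.Icc 1 (k₀ l)) with hB
  have hBK : B ⊆ K := by
    intro k hkB
    rw [hB, Fintype.mem_piFinset] at hkB
    exact admissible_downward K hadm (∑ l, k₀ l) k₀ rfl hk₀K k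
      (fun l => (Finset.mem_Icc.mp (hkB l)).1) (fun l => (Finset.mem_Icc.mp (hkB l)).2)
  have hzero : ∀ k ∈ K, k ∉ B → ∏ l, (q l (k l) - q l (k l - 1)) = 0 := by
    intro k hkK hkB
    rw [hB, Fintype.mem_piFinset] at hkB
    push_neg at hkB
    obtain ⟨l, hl⟩ := hkB
    have h1 := hpos k hkK l
    rw [Finset.mem_Icc] at hl
    push_neg at hl
    have hgt : k₀ l < k l := hl h1
    apply Finset.prod_eq_zero (Finset.mem_univ l)
    rw [hqI' l (k l) (le_of_lt hgt), hqI' l (k l - 1) (by omega)]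
    ring
  have hKsum : ∑ k ∈ K, ∏ l, (q l (k l) - q l (k l - 1))
      = ∑ k ∈ B, ∏ l, (q l (k l) - q l (k l - 1)) :=
    (Finset.sum_subset hBK (fun k hkK hkB => hzero k hkK hkB)).symm
  -- the box sum telescopes
  have hBsum : ∑ k ∈ B, ∏ l, (q l (k l) - q l (k l - 1)) = ∏ l, I l := by
    rw [hB, ← Finset.prod_univ_sum (fun l => Finset.Icc 1 (k₀ l))
      (fun l m => q l m - q l (m - 1))]
    apply Finset.prod_congr rfl
    intro l _
    have hIcc : Finset.Icc 1 (k₀ l) = Finset.Ico 1 (k₀ l + 1) := by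
      rw [Finset.Ico_add_one_right_eq_Icc]
    rw [hIcc, Finset.sum_Ico_eq_sum_range]
    have hle : k₀ l + 1 - 1 = k₀ l := by omega
    rw [hle]
    have hterm : ∀ i, q l (1 + i) - q l (1 + i - 1) = q l (i + 1) - q l i := by
      intro i; congr 2 <;> omega
    rw [Finset.sum_congr rfl fun i _ => hterm i, Finset.sum_range_sub (fun i => q l i),
      hq0 l, sub_zero]
    exact hqI' l (k₀ l) le_rfl
  -- Fubini for the product measure
  have hint : ∫ y, ∏ l, y l ^ α l ∂(Measure.pi μ) = ∏ l, I l := by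
    letI M : ∀ _ : Fin d, MeasureSpace ℝ := fun l => ⟨μ l⟩
    have hsf : ∀ l : Fin d, SigmaFinite (@volume ℝ (M l)) := fun l => inferInstance
    exact integral_fintype_prod_eq_prod (μ := μ) (fun l (t : ℝ) => t ^ α l)
  rw [hstep, hKsum, hBsum, hint]
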